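/- arXiv:2511.06913 — 2 statements merged into one kernel-verified Lean document; each statement's English description precedes it below -/
import Mathlib

section
/- Aitken's theorem (GLS is BLUE), matrix form: let n, d be positive integers, let X be a real n×d matrix of full column rank d, and let Σ be a symmetric positive definite n×n real matrix. Then for every real d×n matrix A with A X = I_d (the coefficient matrix of a linear unbiased estimator), the matrix A Σ Aᵀ − (Xᵀ Σ⁻¹ X)⁻¹ is positive semidefinite; that is, the covariance A Σ Aᵀ of any linear unbiased estimator dominates, in the Loewner order, the covariance (Xᵀ Σ⁻¹ X)⁻¹ of the generalized least squares estimator θ̂_GLS = (Xᵀ Σ⁻¹ X)⁻¹ Xᵀ Σ⁻¹ y. -/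
open Matrix

lemma mulVec_inj_of_rank {n d : ℕ} (X : Matrix (Fin n) (Fin d) ℝ) (hX : X.rank = d) :
    Function.Injective (X.mulVec) := by
  have hrn := LinearMap.finrank_range_add_finrank_ker X.mulVecLin
  rw [show Module.finrank ℝ ↥(LinearMap.range X.mulVecLin) = d from hX] at hrn
  simp only [Module.finrank_pi, Fintype.card_fin] at hrn
  have hker : LinearMap.ker X.mulVecLin = ⊥ :=
    Submodule.finrank_eq_zero.mp (by omega)
  exact LinearMap.ker_eq_bot.mp hker

/-- Aitken's theorem (GLS is BLUE), matrix form: for `X` of full column rank and `S`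
symmetric positive definite, the covariance `A * S * Aᵀ` of any linear unbiased estimator
(`A * X = 1`) dominates the GLS covariance `(Xᵀ * S⁻¹ * X)⁻¹` in the Loewner order. -/
theorem aitken_GLS_is_BLUE (n d : ℕ) (hn : 0 < n) (hd : 0 < d)
    (X : Matrix (Fin n) (Fin d) ℝ) (hX : X.rank = d)
    (S : Matrix (Fin n) (Fin n) ℝ) (hS : S.PosDef)
    (A : Matrix (Fin d) (Fin n) ℝ) (hA : A * X = 1) :
    (A * S * Aᵀ - (Xᵀ * S⁻¹ * X)⁻¹).PosSemidef := by
  have hSinv : S⁻¹.PosDef := hS.inv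
  have hSinvT : (S⁻¹)ᵀ = S⁻¹ := hSinv.isHermitian.eq
  have hXinj := mulVec_inj_of_rank X hX
  set C := Xᵀ * S⁻¹ * X with hCdef
  have hC : C.PosDef := by
    rw [posDef_iff_dotProduct_mulVec]
    constructor
    · have h1 : Xᴴ = Xᵀ := by ext i j; simp
      have := isHermitian_conjTranspose_mul_mul X hSinv.isHermitian
      rwa [h1] at this
    · intro x hx
      have hXx : X *ᵥ x ≠ 0 := by
        intro hcontra
        exact hx (hXinj (by simpa using hcontra))
      have := hSinv.dotProduct_mulVec_pos hXx
      have heq : star x ⬝ᵥ C *ᵥ x = star (X *ᵥ x) ⬝ᵥ S⁻¹ *ᵥ (X *ᵥ x) := by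
        rw [hCdef, ← Matrix.mulVec_mulVec, ← Matrix.mulVec_mulVec]
        rw [Matrix.dotProduct_mulVec, Matrix.vecMul_transpose]
        simp
      rwa [heq]
  have hCu : IsUnit C := hC.isUnit
  have hCinv₁ : C * C⁻¹ = 1 := mul_nonsing_inv C (isUnit_iff_isUnit_det C |>.mp hCu)
  have hCinv₂ : C⁻¹ * C = 1 := nonsing_inv_mul C (isUnit_iff_isUnit_det C |>.mp hCu)
  have hSSinv : S * S⁻¹ = 1 := mul_nonsing_inv S (isUnit_iff_isUnit_det S |>.mp hS.isUnit)
  have hSinvS : S⁻¹ * S = 1 := nonsing_inv_mul S (isUnit_iff_isUnit_det S |>.mp hS.isUnit)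
  have hCT : Cᵀ = C := hC.isHermitian.eq
  have hCiT : (C⁻¹)ᵀ = C⁻¹ := by rw [Matrix.transpose_nonsing_inv, hCT]
  set G := C⁻¹ * Xᵀ * S⁻¹ with hGdef
  have hGT : Gᵀ = S⁻¹ * X * C⁻¹ := by
    rw [hGdef, Matrix.transpose_mul, Matrix.transpose_mul, hSinvT, Matrix.transpose_transpose,
      hCiT, Matrix.mul_assoc]
  have e1 : A * S * Gᵀ = C⁻¹ := by
    rw [hGT]
    calc A * S * (S⁻¹ * X * C⁻¹) = A * (S * S⁻¹) * X * C⁻¹ := by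
          simp only [Matrix.mul_assoc]
      _ = C⁻¹ := by rw [hSSinv, Matrix.mul_one, hA, Matrix.one_mul]
  have e2 : G * S * Aᵀ = C⁻¹ := by
    calc C⁻¹ * Xᵀ * S⁻¹ * S * Aᵀ = C⁻¹ * (Xᵀ * (S⁻¹ * S) * Aᵀ) := by
          simp only [Matrix.mul_assoc]
      _ = C⁻¹ * (A * X)ᵀ := by rw [hSinvS, Matrix.mul_one, Matrix.transpose_mul]
      _ = C⁻¹ := by rw [hA, Matrix.transpose_one, Matrix.mul_one]
  have e3 : G * S * Gᵀ = C⁻¹ := by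
    rw [hGT]
    calc C⁻¹ * Xᵀ * S⁻¹ * S * (S⁻¹ * X * C⁻¹)
        = C⁻¹ * (Xᵀ * ((S⁻¹ * S) * S⁻¹) * X) * C⁻¹ := by simp only [Matrix.mul_assoc]
      _ = C⁻¹ * C * C⁻¹ := by rw [hSinvS, Matrix.one_mul, hCdef, Matrix.mul_assoc]
      _ = C⁻¹ := by rw [hCinv₂, Matrix.one_mul]
  have key : (A - G) * S * (A - G)ᵀ = A * S * Aᵀ - C⁻¹ := by
    rw [Matrix.transpose_sub, Matrix.sub_mul, Matrix.sub_mul, Matrix.mul_sub, Matrix.mul_sub,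
      e1, e2, e3]
    abel
  have hps := hS.posSemidef.mul_mul_conjTranspose_same (A - G)
  have hct : (A - G)ᴴ = (A - G)ᵀ := by ext i j; simp
  rw [hct, key] at hps
  exact hps
end

section
/- Variance ratio bound for weighted least squares (Lemma 1, deterministic trace form): let X be a real n×d matrix of full column rank d, and let σ_j > 0 and w_j > 0 for j = 1, …, n. Set Ω = diag(σ_1², …, σ_n²), W = diag(w_1, …, w_n), and W* = Ω⁻¹ = diag(σ_1⁻², …, σ_n⁻²). Then tr((Xᵀ W X)⁻¹ Xᵀ W Ω W X (Xᵀ W X)⁻¹) ≤ (max_{1≤i≤n} w_i σ_i² / min_{1≤j≤n} w_j σ_j²) · tr((Xᵀ W* X)⁻¹); i.e., the trace of the covariance of the WLS estimator with weights W is at most max_i(w_i σ_i²)/min_j(w_j σ_j²) times the trace of the covariance of the optimally weighted estimator. -/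
open Matrix

section Aux

variable {k : ℕ}

lemma symm_dot {B : Matrix (Fin k) (Fin k) ℝ} (hB : B.IsHermitian) (u v : Fin k → ℝ) :
    v ⬝ᵥ B *ᵥ u = u ⬝ᵥ B *ᵥ v := by
  have hBt : Bᵀ = B := by
    rw [← conjTranspose_eq_transpose_of_trivial]; exact hB
  rw [dotProduct_mulVec, ← mulVec_transpose, hBt, dotProduct_comm]

lemma cs_psd {B : Matrix (Fin k) (Fin k) ℝ} (hB : B.PosSemidef) (u v : Fin k → ℝ) :
    (u ⬝ᵥ B *ᵥ v) ^ 2 ≤ (u ⬝ᵥ B *ᵥ u) * (v ⬝ᵥ B *ᵥ v) := by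
  have key : ∀ t : ℝ, 0 ≤ (v ⬝ᵥ B *ᵥ v) * (t * t) + (2 * (u ⬝ᵥ B *ᵥ v)) * t + (u ⬝ᵥ B *ᵥ u) := by
    intro t
    have h := hB.dotProduct_mulVec_nonneg (u + t • v)
    simp only [star_trivial, mulVec_add, mulVec_smul, dotProduct_add, add_dotProduct,
      dotProduct_smul, smul_dotProduct, smul_mulVec, smul_eq_mul,
      symm_dot hB.isHermitian u v] at h
    nlinarith [h]
  have hd := discrim_le_zero key
  rw [discrim] at hd
  nlinarith [hd]

lemma arith {s t a : ℝ} (h1 : s ^ 2 ≤ a * t) (h2 : a ≤ s) (hs : 0 ≤ s) (ht : 0 ≤ t) :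
    s ≤ t := by
  rcases eq_or_lt_of_le hs with h0 | h0
  · linarith
  · nlinarith [mul_le_mul_of_nonneg_right h2 ht]

lemma quad_inv_le {A B : Matrix (Fin k) (Fin k) ℝ} (hA : A.PosDef) (hB : B.PosDef)
    (h : (A - B).PosSemidef) (x : Fin k → ℝ) :
    x ⬝ᵥ A⁻¹ *ᵥ x ≤ x ⬝ᵥ B⁻¹ *ᵥ x := by
  have hdA : IsUnit A.det := hA.det_pos.ne'.isUnit
  have hdB : IsUnit B.det := hB.det_pos.ne'.isUnit
  set u := A⁻¹ *ᵥ x with hu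
  set v := B⁻¹ *ᵥ x with hv
  have hAu : A *ᵥ u = x := by rw [hu, mulVec_mulVec, mul_nonsing_inv _ hdA, one_mulVec]
  have hBv : B *ᵥ v = x := by rw [hv, mulVec_mulVec, mul_nonsing_inv _ hdB, one_mulVec]
  have hs : x ⬝ᵥ A⁻¹ *ᵥ x = u ⬝ᵥ A *ᵥ u := by
    rw [hAu, ← hu, dotProduct_comm]
  have ht : x ⬝ᵥ B⁻¹ *ᵥ x = v ⬝ᵥ B *ᵥ v := by
    rw [hBv, ← hv, dotProduct_comm]
  have hub : u ⬝ᵥ B *ᵥ v = x ⬝ᵥ A⁻¹ *ᵥ x := by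
    rw [hBv, ← hu, dotProduct_comm]
  have hcs := cs_psd hB.posSemidef u v
  have huAB : u ⬝ᵥ B *ᵥ u ≤ u ⬝ᵥ A *ᵥ u := by
    have h2 := h.dotProduct_mulVec_nonneg u
    rw [star_trivial, sub_mulVec, dotProduct_sub] at h2
    linarith
  have huA : 0 ≤ u ⬝ᵥ A *ᵥ u := by
    have := hA.posSemidef.dotProduct_mulVec_nonneg u; rwa [star_trivial] at this
  have hvB : 0 ≤ v ⬝ᵥ B *ᵥ v := by
    have := hB.posSemidef.dotProduct_mulVec_nonneg v; rwa [star_trivial] at this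
  rw [hub, hs] at hcs
  rw [hs, ht]
  exact arith hcs huAB huA hvB

lemma single_quad (A : Matrix (Fin k) (Fin k) ℝ) (i : Fin k) :
    Pi.single i 1 ⬝ᵥ A *ᵥ Pi.single i 1 = A i i := by
  simp [mulVec_single, single_dotProduct]

lemma trace_inv_le {A B : Matrix (Fin k) (Fin k) ℝ} (hA : A.PosDef) (hB : B.PosDef)
    (h : (A - B).PosSemidef) : A⁻¹.trace ≤ B⁻¹.trace := by
  rw [trace, trace]
  apply Finset.sum_le_sum
  intro i _
  have := quad_inv_le hA hB h (Pi.single i 1)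
  rwa [single_quad, single_quad] at this

lemma trace_nonneg_of_psd {A : Matrix (Fin k) (Fin k) ℝ} (hA : A.PosSemidef) : 0 ≤ A.trace := by
  rw [trace]
  apply Finset.sum_nonneg
  intro i _
  have := hA.dotProduct_mulVec_nonneg (Pi.single i 1)
  rw [star_trivial, single_quad] at this
  exact this

end Aux

open Matrix

section Aux2

lemma psd_conj {n d : ℕ} (X : Matrix (Fin n) (Fin d) ℝ) {e : Fin n → ℝ} (he : ∀ i, 0 ≤ e i) :
    (Xᵀ * Matrix.diagonal e * X).PosSemidef := by
  have h := (Matrix.PosSemidef.diagonal (fun i => he i : (0 : Fin n → ℝ) ≤ e)).conjTranspose_mul_mul_same X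
  rwa [conjTranspose_eq_transpose_of_trivial] at h

lemma inj_of_rank {n d : ℕ} (X : Matrix (Fin n) (Fin d) ℝ) (hX : X.rank = d) :
    Function.Injective X.mulVec := by
  have hker : LinearMap.ker X.mulVecLin = ⊥ := by
    have h1 := LinearMap.finrank_range_add_finrank_ker X.mulVecLin
    rw [show Module.finrank ℝ (LinearMap.range X.mulVecLin) = d from hX, Module.finrank_pi, Fintype.card_fin] at h1
    have h2 : Module.finrank ℝ (LinearMap.ker X.mulVecLin) = 0 := by omega
    exact Submodule.finrank_eq_zero.mp h2
  have := LinearMap.ker_eq_bot.mp hker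
  intro x y hxy
  exact this hxy

lemma posDef_conj {n d : ℕ} (X : Matrix (Fin n) (Fin d) ℝ) (hinj : Function.Injective X.mulVec)
    {e : Fin n → ℝ} (he : ∀ i, 0 < e i) : (Xᵀ * Matrix.diagonal e * X).PosDef := by
  have hD : (Matrix.diagonal e).PosDef := .diagonal he
  refine .of_dotProduct_mulVec_pos (psd_conj X fun i => (he i).le).isHermitian (fun x hx => ?_)
  have hxX : X *ᵥ x ≠ 0 := by
    intro hc
    exact hx (hinj (by rw [hc, mulVec_zero]))
  have hpos := hD.dotProduct_mulVec_pos hxX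
  rw [star_trivial] at hpos ⊢
  rwa [← mulVec_mulVec, ← mulVec_mulVec, dotProduct_mulVec x Xᵀ, vecMul_transpose]

end Aux2

/-- Variance ratio bound for weighted least squares (Lemma 1, deterministic trace form):
the trace of the covariance of the WLS estimator with weights `w` is at most
`max_i (w_i σ_i²) / min_j (w_j σ_j²)` times the trace of the optimally weighted covariance. -/
theorem wls_variance_ratio_bound (n d : ℕ) (hn : 0 < n) (hd : 0 < d)
    (X : Matrix (Fin n) (Fin d) ℝ) (hX : X.rank = d)
    (σ : Fin n → ℝ) (hσ : ∀ j, 0 < σ j)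
    (w : Fin n → ℝ) (hw : ∀ j, 0 < w j) :
    haveI : Nonempty (Fin n) := Fin.pos_iff_nonempty.mp hn
    Matrix.trace ((Xᵀ * Matrix.diagonal w * X)⁻¹
        * (Xᵀ * Matrix.diagonal w * Matrix.diagonal (fun j => (σ j) ^ 2)
            * Matrix.diagonal w * X)
        * (Xᵀ * Matrix.diagonal w * X)⁻¹)
      ≤ (Finset.univ.sup' Finset.univ_nonempty (fun i => w i * (σ i) ^ 2)
          / Finset.univ.inf' Finset.univ_nonempty (fun j => w j * (σ j) ^ 2))
        * Matrix.trace ((Xᵀ * Matrix.diagonal (fun j => ((σ j) ^ 2)⁻¹) * X)⁻¹) := by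
  haveI : Nonempty (Fin n) := Fin.pos_iff_nonempty.mp hn
  set M := Finset.univ.sup' Finset.univ_nonempty (fun i => w i * (σ i) ^ 2) with hM
  set m := Finset.univ.inf' Finset.univ_nonempty (fun j => w j * (σ j) ^ 2) with hm
  set A := Xᵀ * Matrix.diagonal w * X with hA_def
  set B := Xᵀ * Matrix.diagonal w * Matrix.diagonal (fun j => (σ j) ^ 2)
      * Matrix.diagonal w * X with hB_def
  set C := Xᵀ * Matrix.diagonal (fun j => ((σ j) ^ 2)⁻¹) * X with hC_def
  have hinj := inj_of_rank X hX
  have hA : A.PosDef := posDef_conj X hinj hw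
  have hdA : IsUnit A.det := hA.det_pos.ne'.isUnit
  have hC : C.PosDef := posDef_conj X hinj (fun j => by have := hσ j; positivity)
  have hbound : ∀ i, w i * σ i ^ 2 ≤ M := by
    intro i; rw [hM]; exact Finset.le_sup' (fun i => w i * (σ i) ^ 2) (Finset.mem_univ i)
  have hlow : ∀ i, m ≤ w i * σ i ^ 2 := by
    intro i; rw [hm]; exact Finset.inf'_le (fun j => w j * (σ j) ^ 2) (Finset.mem_univ i)
  have hmpos : 0 < m := by
    rw [hm, Finset.lt_inf'_iff]
    exact fun i _ => mul_pos (hw i) (pow_pos (hσ i) 2)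
  have hMpos : 0 < M :=
    lt_of_lt_of_le (mul_pos (hw ⟨0, hn⟩) (pow_pos (hσ ⟨0, hn⟩) 2)) (hbound ⟨0, hn⟩)
  -- Step 1 : trace (A⁻¹ * B * A⁻¹) ≤ M * trace A⁻¹
  have key1 : Matrix.trace (A⁻¹ * B * A⁻¹) ≤ M * Matrix.trace A⁻¹ := by
    have hdiag : Matrix.diagonal (fun j => M * w j - w j * σ j ^ 2 * w j)
        = M • Matrix.diagonal w
          - Matrix.diagonal w * Matrix.diagonal (fun j => σ j ^ 2) * Matrix.diagonal w := by
      rw [Matrix.diagonal_mul_diagonal, Matrix.diagonal_mul_diagonal, ← Matrix.diagonal_smul,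
        Matrix.diagonal_sub]
      rfl
    have hsplit : Xᵀ * Matrix.diagonal (fun j => M * w j - w j * σ j ^ 2 * w j) * X
        = M • A - B := by
      rw [hdiag, hA_def, hB_def]
      simp only [Matrix.mul_sub, Matrix.sub_mul, Matrix.mul_smul, Matrix.smul_mul,
        Matrix.mul_assoc]
    have hpsd : (A⁻¹ * (Xᵀ * Matrix.diagonal (fun j => M * w j - w j * σ j ^ 2 * w j) * X)
        * A⁻¹).PosSemidef := by
      have hE : (Matrix.diagonal (fun j => M * w j - w j * σ j ^ 2 * w j)).PosSemidef := by
        refine Matrix.PosSemidef.diagonal (fun j => ?_)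
        simp only [Pi.zero_apply]
        nlinarith [hbound j, hw j, mul_nonneg (sub_nonneg.mpr (hbound j)) (hw j).le]
      have h2 := hE.conjTranspose_mul_mul_same (X * A⁻¹)
      have h3 : (X * A⁻¹)ᴴ = A⁻¹ * Xᵀ := by
        rw [conjTranspose_mul, hA.inv.isHermitian.eq, ← conjTranspose_eq_transpose_of_trivial]
      rw [h3] at h2
      convert h2 using 1
      simp only [Matrix.mul_assoc]
    have htr := trace_nonneg_of_psd hpsd
    rw [hsplit, Matrix.mul_sub, Matrix.sub_mul, Matrix.trace_sub, Matrix.mul_smul,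
      Matrix.nonsing_inv_mul A hdA, Matrix.smul_mul, Matrix.one_mul, Matrix.trace_smul,
      smul_eq_mul] at htr
    linarith
  -- Step 2 : trace A⁻¹ ≤ m⁻¹ * trace C⁻¹
  have hCm_eq : m • C = Xᵀ * Matrix.diagonal (fun j => m * ((σ j) ^ 2)⁻¹) * X := by
    rw [show (fun j => m * ((σ j) ^ 2)⁻¹) = m • (fun j => ((σ j) ^ 2)⁻¹) from rfl,
      Matrix.diagonal_smul, hC_def]
    simp only [Matrix.mul_smul, Matrix.smul_mul]
  have hCm : (m • C).PosDef := by
    rw [hCm_eq]; exact posDef_conj X hinj (fun j => by have := hσ j; positivity)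
  have hdiff : (A - m • C).PosSemidef := by
    have heq : A - m • C = Xᵀ * Matrix.diagonal (fun j => w j - m * ((σ j) ^ 2)⁻¹) * X := by
      have hdiag2 : Matrix.diagonal (fun j => w j - m * ((σ j) ^ 2)⁻¹)
          = Matrix.diagonal w - m • Matrix.diagonal (fun j => ((σ j) ^ 2)⁻¹) := by
        rw [← Matrix.diagonal_smul, Matrix.diagonal_sub]
        rfl
      rw [hdiag2, hA_def, hC_def]
      simp only [Matrix.mul_sub, Matrix.sub_mul, Matrix.mul_smul, Matrix.smul_mul,
        Matrix.mul_assoc]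
    rw [heq]
    refine psd_conj X (fun j => ?_)
    have h2 : (0:ℝ) < σ j ^ 2 := pow_pos (hσ j) 2
    have h3 : m * (σ j ^ 2)⁻¹ ≤ (w j * σ j ^ 2) * (σ j ^ 2)⁻¹ :=
      mul_le_mul_of_nonneg_right (hlow j) (by positivity)
    rw [mul_assoc, mul_inv_cancel₀ h2.ne', mul_one] at h3
    linarith
  have key2 := trace_inv_le hA hCm hdiff
  have hinv : (m • C)⁻¹ = m⁻¹ • C⁻¹ := by
    apply Matrix.inv_eq_right_inv
    rw [Matrix.mul_smul, Matrix.smul_mul, Matrix.mul_nonsing_inv _ hC.det_pos.ne'.isUnit,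
      smul_smul, inv_mul_cancel₀ hmpos.ne', one_smul]
  rw [hinv, Matrix.trace_smul, smul_eq_mul] at key2
  calc Matrix.trace (A⁻¹ * B * A⁻¹) ≤ M * Matrix.trace A⁻¹ := key1
    _ ≤ M * (m⁻¹ * Matrix.trace C⁻¹) := mul_le_mul_of_nonneg_left key2 hMpos.le
    _ = M / m * Matrix.trace C⁻¹ := by rw [div_eq_mul_inv]; ring
end
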